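/- For every positive integer k, the k-clique blowup C_5^k of the 5-cycle C_5 is a (cap, even hole)-free graph with ω(C_5^k) = 2k and χ(C_5^k) = ⌈5k/2⌉ = ⌈(5/4)·ω(C_5^k)⌉; hence the bound χ(G) ≤ ⌈(5/4)·ω(G)⌉ for (cap, even hole)-free graphs is attained for every even value of the clique number. -/

import Mathlib

open SimpleGraph

/-- A cap on a hole of length `n`: the cycle `C_n` together with one extra vertex (`none`)
adjacent exactly to the two adjacent vertices `0` and `1` of the cycle. -/
def capGraph (n : ℕ) : SimpleGraph (Option (Fin n)) :=
  SimpleGraph.fromRel (fun a b =>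
    match a, b with
    | some i, some j => (cycleGraph n).Adj i j
    | some i, none => i.val = 0 ∨ i.val = 1
    | none, _ => False)

/-- `G` contains an induced copy of `H`. -/
def HasInducedCopy {α β : Type} (H : SimpleGraph α) (G : SimpleGraph β) : Prop :=
  Nonempty (H ↪g G)

/-- `G` is cap-free: it contains no induced cap built on a hole of length `n ≥ 4`. -/
def CapFree {β : Type} (G : SimpleGraph β) : Prop :=
  ∀ n : ℕ, 4 ≤ n → ¬ HasInducedCopy (capGraph n) G

/-- `G` is even-hole-free: it contains no induced cycle of even length `n ≥ 4`. -/
def EvenHoleFree {β : Type} (G : SimpleGraph β) : Prop :=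
  ∀ n : ℕ, 4 ≤ n → Even n → ¬ HasInducedCopy (cycleGraph n) G

/-- The `t`-clique blowup `H^t` of a graph `H`: each vertex `v` of `H` is replaced by a
clique of size `t`, cliques of adjacent vertices are complete to each other and cliques
of distinct nonadjacent vertices are anticomplete. -/
def cliqueBlowupPow {α : Type} (H : SimpleGraph α) (t : ℕ) : SimpleGraph (α × Fin t) :=
  SimpleGraph.fromRel (fun x y => x.1 = y.1 ∨ H.Adj x.1 y.1)

lemma blowup_adj {α : Type} (H : SimpleGraph α) (t : ℕ) (x y : α × Fin t) :
    (cliqueBlowupPow H t).Adj x y ↔ x ≠ y ∧ (x.1 = y.1 ∨ H.Adj x.1 y.1) := by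
  rw [cliqueBlowupPow, fromRel_adj]
  refine and_congr_right fun _ => ?_
  constructor
  · rintro ((h|h)|(h|h))
    exacts [Or.inl h, Or.inr h, Or.inl h.symm, Or.inr h.symm]
  · exact Or.inl

lemma cap_some_adj {n : ℕ} (i j : Fin n) :
    (capGraph n).Adj (some i) (some j) ↔ (cycleGraph n).Adj i j := by
  rw [capGraph, fromRel_adj]
  constructor
  · rintro ⟨hne, h|h⟩
    · exact h
    · exact h.symm
  · intro h
    exact ⟨by simpa using h.ne, Or.inl h⟩

lemma cap_none_adj {n : ℕ} (i : Fin n) :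
    (capGraph n).Adj none (some i) ↔ (i.val = 0 ∨ i.val = 1) := by
  rw [capGraph, fromRel_adj]
  constructor
  · rintro ⟨hne, h|h⟩
    · exact h.elim
    · exact h
  · intro h
    exact ⟨by simp, Or.inr h⟩

open scoped Fin.NatCast Fin.CommRing

lemma fin_cast_eq {n a b : ℕ} [NeZero n] (ha : a < n) (hb : b < n)
    (h : ((a : ℕ) : Fin n) = ((b : ℕ) : Fin n)) : a = b := by
  have := congrArg Fin.val h
  rwa [Fin.val_natCast, Fin.val_natCast, Nat.mod_eq_of_lt ha, Nat.mod_eq_of_lt hb] at this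

/-- key step: two vertices of an embedded long cycle cannot lie in the same blob -/
lemma cycle_step {k m : ℕ}
    (f : cycleGraph (m + 4) ↪g cliqueBlowupPow (cycleGraph 5) k) {i j : Fin (m + 4)}
    (hblob : (f i).1 = (f j).1) (h : j - i = 1) : False := by
  have hij : i ≠ j := by
    rintro rfl
    have : ((1:ℕ) : Fin (m+4)) = ((0:ℕ) : Fin (m+4)) := by push_cast; linear_combination -h
    have := fin_cast_eq (by omega) (by omega) this
    omega
  -- c := i - 1
  have hca : (cycleGraph (m + 4)).Adj (i - 1) i := by
    refine (cycleGraph_adj (n := m+2)).mpr (Or.inr ?_)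
    ring
  have hcb : ¬ (cycleGraph (m + 4)).Adj (i - 1) j := by
    intro hadj
    rcases (cycleGraph_adj (n := m+2)).mp hadj with h1 | h1
    · have : ((3:ℕ) : Fin (m+4)) = ((0:ℕ) : Fin (m+4)) := by
        push_cast; linear_combination - h1 - h
      have := fin_cast_eq (by omega) (by omega) this
      omega
    · have : ((2:ℕ) : Fin (m+4)) = ((1:ℕ) : Fin (m+4)) := by
        push_cast; linear_combination h1 - h
      have := fin_cast_eq (by omega) (by omega) this
      omega
  have hcnej : i - 1 ≠ j := by
    intro he
    have : ((2:ℕ) : Fin (m+4)) = ((0:ℕ) : Fin (m+4)) := by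
      push_cast; linear_combination - he - h
    have := fin_cast_eq (by omega) (by omega) this
    omega
  -- transfer
  have hGca : (cliqueBlowupPow (cycleGraph 5) k).Adj (f (i-1)) (f i) := f.map_rel_iff.mpr hca
  rw [blowup_adj] at hGca
  obtain ⟨-, heq | hadj⟩ := hGca
  · exact hcb (f.map_rel_iff.mp ((blowup_adj _ _ _ _).mpr
      ⟨fun hc => hcnej (f.injective hc), Or.inl (heq.trans hblob)⟩))
  · exact hcb (f.map_rel_iff.mp ((blowup_adj _ _ _ _).mpr
      ⟨fun hc => hcnej (f.injective hc), Or.inr (hblob ▸ hadj)⟩))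

/-- structure of an embedded hole: blob map is injective and reflects adjacency -/
lemma cycle_emb_struct {k n : ℕ} (hn : 4 ≤ n)
    (f : cycleGraph n ↪g cliqueBlowupPow (cycleGraph 5) k) :
    Function.Injective (fun i => (f i).1) ∧
      ∀ i j, (cycleGraph n).Adj i j ↔ (cycleGraph 5).Adj (f i).1 (f j).1 := by
  obtain ⟨m, rfl⟩ : ∃ m, n = m + 4 := ⟨n - 4, by omega⟩
  have hinj : Function.Injective (fun i : Fin (m+4) => (f i).1) := by
    intro i j hblob
    by_contra hne
    have hfne : f i ≠ f j := fun h => hne (f.injective h)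
    have hadj : (cycleGraph (m+4)).Adj i j :=
      f.map_rel_iff.mp ((blowup_adj _ _ _ _).mpr ⟨hfne, Or.inl hblob⟩)
    rcases (cycleGraph_adj (n := m+2)).mp hadj with h | h
    · exact cycle_step f hblob.symm h
    · exact cycle_step f hblob h
  refine ⟨hinj, fun i j => ?_⟩
  constructor
  · intro h
    have := f.map_rel_iff.mpr h
    rw [blowup_adj] at this
    obtain ⟨-, heq | hadj⟩ := this
    · exact absurd (hinj heq) h.ne
    · exact hadj
  · intro h
    have hfne : f i ≠ f j := fun hc => h.ne (congrArg Prod.fst hc)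
    exact f.map_rel_iff.mp ((blowup_adj _ _ _ _).mpr ⟨hfne, Or.inr h⟩)

set_option maxRecDepth 20000 in
lemma no_c4 : ∀ g : Fin 4 → Fin 5, Function.Injective g →
    ¬ ∀ i j, ((cycleGraph 4).Adj i j ↔ (cycleGraph 5).Adj (g i) (g j)) := by decide

lemma c5_triangle_free : ∀ a b c : Fin 5, (cycleGraph 5).Adj a b → (cycleGraph 5).Adj a c →
    (cycleGraph 5).Adj b c → False := by decide

lemma c5_indep3 : ∀ a b c : Fin 5, a ≠ b → a ≠ c → b ≠ c → ¬(cycleGraph 5).Adj a b →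
    ¬(cycleGraph 5).Adj a c → ¬(cycleGraph 5).Adj b c → False := by decide

lemma c5_adj_val : ∀ u v : Fin 5, (cycleGraph 5).Adj u v →
    (u.val = 0 ∧ v.val = 1) ∨ (u.val = 1 ∧ v.val = 0) ∨
    (u.val = 1 ∧ v.val = 2) ∨ (u.val = 2 ∧ v.val = 1) ∨
    (u.val = 2 ∧ v.val = 3) ∨ (u.val = 3 ∧ v.val = 2) ∨
    (u.val = 3 ∧ v.val = 4) ∨ (u.val = 4 ∧ v.val = 3) ∨
    (u.val = 4 ∧ v.val = 0) ∨ (u.val = 0 ∧ v.val = 4) := by decide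

lemma mod_helper {m u v : ℕ} (hm : 0 < m) (h : u % m = v % m) (h2 : u < v + 2*m)
    (h3 : v < u + 2*m) : u = v ∨ u + m = v ∨ v + m = u := by
  rcases le_total u v with hle | hle
  · obtain ⟨c, hc⟩ := (Nat.modEq_iff_dvd' hle).mp h
    match c with
    | 0 => left; omega
    | 1 => right; left; omega
    | (c+2) =>
      exfalso
      have : m * 2 ≤ m * (c + 2) := Nat.mul_le_mul_left m (by omega)
      omega
  · obtain ⟨c, hc⟩ := (Nat.modEq_iff_dvd' hle).mp h.symm
    match c with
    | 0 => left; omega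
    | 1 => right; right; omega
    | (c+2) =>
      exfalso
      have : m * 2 ≤ m * (c + 2) := Nat.mul_le_mul_left m (by omega)
      omega

lemma blowup_cliqueNum (k : ℕ) :
    (cliqueBlowupPow (cycleGraph 5) k).cliqueNum = 2 * k := by
  set G := cliqueBlowupPow (cycleGraph 5) k with hG
  -- every clique has size at most 2k
  have hupper : ∀ t : Finset (Fin 5 × Fin k), G.IsClique t → t.card ≤ 2 * k := by
    intro t ht
    have himage : (t.image Prod.fst).card ≤ 2 := by
      by_contra hgt
      obtain ⟨a, b, c, ha, hb, hc, hab, hac, hbc⟩ :=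
        Finset.two_lt_card_iff.mp (lt_of_not_ge hgt)
      obtain ⟨x, hx, rfl⟩ := Finset.mem_image.mp ha
      obtain ⟨y, hy, rfl⟩ := Finset.mem_image.mp hb
      obtain ⟨z, hz, rfl⟩ := Finset.mem_image.mp hc
      have adj1 : (cycleGraph 5).Adj x.1 y.1 := by
        have := ht hx hy (fun h => hab (congrArg Prod.fst h))
        rw [hG, blowup_adj] at this
        exact this.2.resolve_left hab
      have adj2 : (cycleGraph 5).Adj x.1 z.1 := by
        have := ht hx hz (fun h => hac (congrArg Prod.fst h))
        rw [hG, blowup_adj] at this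
        exact this.2.resolve_left hac
      have adj3 : (cycleGraph 5).Adj y.1 z.1 := by
        have := ht hy hz (fun h => hbc (congrArg Prod.fst h))
        rw [hG, blowup_adj] at this
        exact this.2.resolve_left hbc
      exact c5_triangle_free _ _ _ adj1 adj2 adj3
    have hfiber : ∀ b ∈ t.image Prod.fst, (t.filter (fun x => x.1 = b)).card ≤ k := by
      intro b _
      calc (t.filter (fun x => x.1 = b)).card
          ≤ (Finset.univ : Finset (Fin k)).card := by
            apply Finset.card_le_card_of_injOn Prod.snd (fun x _ => Finset.mem_univ _)
            intro x hx y hy hxy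
            simp only [Finset.coe_filter, Set.mem_setOf_eq] at hx hy
            exact Prod.ext (hx.2.trans hy.2.symm) hxy
        _ = k := by simp
    calc t.card ≤ k * (t.image Prod.fst).card := Finset.card_le_mul_card_image t k hfiber
      _ ≤ k * 2 := Nat.mul_le_mul_left k himage
      _ = 2 * k := by ring
  -- a clique of size 2k
  have hlower : G.IsNClique (2 * k) (({0, 1} : Finset (Fin 5)) ×ˢ Finset.univ) := by
    constructor
    · intro x hx y hy hxy
      simp only [Finset.coe_product, Set.mem_prod, Finset.coe_insert, Set.mem_insert_iff,
        Finset.coe_singleton, Set.mem_singleton_iff] at hx hy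
      rw [hG, blowup_adj]
      refine ⟨hxy, ?_⟩
      by_cases h : x.1 = y.1
      · exact Or.inl h
      · right
        rcases hx.1 with h1 | h1 <;> rcases hy.1 with h2 | h2 <;>
          first
            | (exfalso; exact h (h1.trans h2.symm))
            | (rw [h1, h2]; decide)
    · have h01 : ({0, 1} : Finset (Fin 5)).card = 2 := by decide
      rw [Finset.card_product, h01, Finset.card_univ, Fintype.card_fin]
  apply le_antisymm
  · obtain ⟨s, hs⟩ := G.exists_isNClique_cliqueNum
    rw [← hs.card_eq]
    exact hupper s hs.isClique
  · rw [← hlower.card_eq]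
    exact hlower.isClique.card_le_cliqueNum

lemma blowup_chromatic (k : ℕ) (hk : 1 ≤ k) :
    (cliqueBlowupPow (cycleGraph 5) k).chromaticNumber = (((5 * k + 1) / 2 : ℕ) : ℕ∞) := by
  set G := cliqueBlowupPow (cycleGraph 5) k with hG
  set m := (5 * k + 1) / 2 with hm
  have hm5 : 5 * k ≤ 2 * m := by omega
  have hm5' : 2 * m ≤ 5 * k + 1 := by omega
  have hm0 : 0 < m := by omega
  -- the coloring
  have hcolorable : G.Colorable m := by
    refine ⟨SimpleGraph.Coloring.mk
      (fun v => ⟨(v.1.val * k + v.2.val) % m, Nat.mod_lt _ hm0⟩) ?_⟩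
    intro x y hxy hcol
    rw [hG, blowup_adj] at hxy
    obtain ⟨hne, heq | hadj⟩ := hxy
    have hv : (x.1.val * k + x.2.val) % m = (y.1.val * k + y.2.val) % m :=
      congrArg Fin.val hcol
    · -- same blob
      have hab : x.2 ≠ y.2 := fun h => hne (Prod.ext heq h)
      rw [heq] at hv
      have h2 : x.2.val ≠ y.2.val := fun h => hab (Fin.ext h)
      have ha := x.2.isLt
      have hb := y.2.isLt
      rcases mod_helper hm0 hv (by omega) (by omega) with h | h | h <;> omega
    · have hv : (x.1.val * k + x.2.val) % m = (y.1.val * k + y.2.val) % m :=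
        congrArg Fin.val hcol
      have ha := x.2.isLt
      have hb := y.2.isLt
      rcases c5_adj_val _ _ hadj with ⟨h1, h2⟩|⟨h1, h2⟩|⟨h1, h2⟩|⟨h1, h2⟩|⟨h1, h2⟩|⟨h1, h2⟩
        |⟨h1, h2⟩|⟨h1, h2⟩|⟨h1, h2⟩|⟨h1, h2⟩ <;>
        rw [h1, h2] at hv <;>
        rcases mod_helper hm0 hv (by omega) (by omega) with h | h | h <;> omega
  -- lower bound
  have hlow : ∀ n : ℕ, G.Colorable n → m ≤ n := by
    intro n hc
    obtain ⟨C⟩ := hc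
    have hcard : (Finset.univ : Finset (Fin 5 × Fin k)).card =
        ∑ c : Fin n, (Finset.univ.filter (fun v => C v = c)).card :=
      Finset.card_eq_sum_card_fiberwise (fun x _ => Finset.mem_univ _)
    have hfib : ∀ c : Fin n, (Finset.univ.filter (fun v => C v = c)).card ≤ 2 := by
      intro c
      by_contra hgt
      obtain ⟨a, b, d, ha, hb, hd, hab, had, hbd⟩ :=
        Finset.two_lt_card_iff.mp (lt_of_not_ge hgt)
      simp only [Finset.mem_filter, Finset.mem_univ, true_and] at ha hb hd
      have nab : ¬ G.Adj a b := fun h => C.valid h (ha.trans hb.symm)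
      have nad : ¬ G.Adj a d := fun h => C.valid h (ha.trans hd.symm)
      have nbd : ¬ G.Adj b d := fun h => C.valid h (hb.trans hd.symm)
      rw [hG, blowup_adj] at nab nad nbd
      push_neg at nab nad nbd
      have e1 := nab hab
      have e2 := nad had
      have e3 := nbd hbd
      exact c5_indep3 a.1 b.1 d.1 e1.1 e2.1 e3.1 e1.2 e2.2 e3.2
    have htot : 5 * k ≤ 2 * n := by
      have h1 : (Finset.univ : Finset (Fin 5 × Fin k)).card = 5 * k := by
        simp [Fintype.card_prod]
      have h2 : ∑ c : Fin n, (Finset.univ.filter (fun v => C v = c)).card ≤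
          ∑ _c : Fin n, 2 := Finset.sum_le_sum (fun c _ => hfib c)
      have h3 : ∑ _c : Fin n, 2 = 2 * n := by
        rw [Finset.sum_const, Finset.card_univ, Fintype.card_fin, smul_eq_mul, mul_comm]
      omega
    omega
  apply le_antisymm
  · exact hcolorable.chromaticNumber_le
  · rw [SimpleGraph.chromaticNumber_eq_biInf]
    exact le_iInf₂ fun n hn => Nat.cast_le.mpr (hlow n hn)

lemma blowup_evenHoleFree (k : ℕ) : EvenHoleFree (cliqueBlowupPow (cycleGraph 5) k) := by
  rintro n hn he ⟨f⟩
  obtain ⟨hinj, hiff⟩ := cycle_emb_struct hn f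
  have hle : n ≤ 5 := by
    have := Fintype.card_le_of_injective _ hinj
    simpa using this
  have hn4 : n = 4 := by
    rw [Nat.even_iff] at he
    omega
  subst hn4
  exact no_c4 _ hinj hiff

lemma blowup_capFree (k : ℕ) : CapFree (cliqueBlowupPow (cycleGraph 5) k) := by
  rintro n hn ⟨F⟩
  let someEmb : cycleGraph n ↪g capGraph n :=
    ⟨⟨some, Option.some_injective _⟩, fun {a b} => cap_some_adj a b⟩
  let f : cycleGraph n ↪g cliqueBlowupPow (cycleGraph 5) k := F.comp someEmb
  have hfF : ∀ i, f i = F (some i) := fun _ => rfl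
  obtain ⟨hinj, hiff⟩ := cycle_emb_struct hn f
  have hle : n ≤ 5 := by
    have := Fintype.card_le_of_injective _ hinj
    simpa using this
  interval_cases n
  · exact no_c4 _ hinj hiff
  · -- n = 5
    have hsurj : Function.Surjective (fun i => (f i).1) :=
      Finite.injective_iff_surjective.mp hinj
    obtain ⟨i₀, hi₀⟩ := hsurj (F none).1
    have hwf : ∀ i : Fin 5, F none ≠ f i := by
      intro i h
      rw [hfF] at h
      exact absurd (F.injective h) (Option.some_ne_none i).symm
    have hAdj_iff : ∀ i : Fin 5,
        (cliqueBlowupPow (cycleGraph 5) k).Adj (F none) (f i) ↔ (i.val = 0 ∨ i.val = 1) := by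
      intro i
      rw [hfF]
      exact F.map_rel_iff.trans (cap_none_adj i)
    have h0 : (cliqueBlowupPow (cycleGraph 5) k).Adj (F none) (f i₀) :=
      (blowup_adj _ _ _ _).mpr ⟨hwf i₀, Or.inl hi₀.symm⟩
    rcases (hAdj_iff i₀).mp h0 with hv | hv
    · have hi0 : i₀ = 0 := Fin.ext hv
      have hC : (cycleGraph 5).Adj i₀ 4 := by rw [hi0]; decide
      have hCg : (cycleGraph 5).Adj (f i₀).1 (f 4).1 := (hiff i₀ 4).mp hC
      have hadj4 : (cliqueBlowupPow (cycleGraph 5) k).Adj (F none) (f 4) :=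
        (blowup_adj _ _ _ _).mpr ⟨hwf 4, Or.inr (hi₀ ▸ hCg)⟩
      rcases (hAdj_iff 4).mp hadj4 with h | h <;> revert h <;> decide
    · have hi0 : i₀ = 1 := Fin.ext hv
      have hC : (cycleGraph 5).Adj i₀ 2 := by rw [hi0]; decide
      have hCg : (cycleGraph 5).Adj (f i₀).1 (f 2).1 := (hiff i₀ 2).mp hC
      have hadj2 : (cliqueBlowupPow (cycleGraph 5) k).Adj (F none) (f 2) :=
        (blowup_adj _ _ _ _).mpr ⟨hwf 2, Or.inr (hi₀ ▸ hCg)⟩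
      rcases (hAdj_iff 2).mp hadj2 with h | h <;> revert h <;> decide


/-- For every positive integer `k`, the `k`-clique blowup `C₅ᵏ` of the 5-cycle is a
(cap, even hole)-free graph with `ω = 2k` and `χ = ⌈5k/2⌉ = ⌈(5/4)·ω⌉`; hence the bound
`χ(G) ≤ ⌈(5/4)·ω(G)⌉` for (cap, even hole)-free graphs is attained for every even value
of the clique number. -/
theorem blowup_C5_extremal (k : ℕ) (hk : 1 ≤ k) :
    CapFree (cliqueBlowupPow (cycleGraph 5) k) ∧
    EvenHoleFree (cliqueBlowupPow (cycleGraph 5) k) ∧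
    (cliqueBlowupPow (cycleGraph 5) k).cliqueNum = 2 * k ∧
    (cliqueBlowupPow (cycleGraph 5) k).chromaticNumber =
      ((⌈(5 * k : ℚ) / 2⌉₊ : ℕ) : ℕ∞) ∧
    (cliqueBlowupPow (cycleGraph 5) k).chromaticNumber =
      ((⌈(5 : ℚ) / 4 * ((cliqueBlowupPow (cycleGraph 5) k).cliqueNum : ℚ)⌉₊ : ℕ) : ℕ∞) := by
  have hceil : ⌈(5 * k : ℚ) / 2⌉₊ = (5 * k + 1) / 2 := by
    rw [Nat.ceil_eq_iff (by omega)]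
    constructor
    · rw [lt_div_iff₀ (by norm_num : (0:ℚ) < 2)]
      have : ((5 * k + 1) / 2 - 1) * 2 < 5 * k := by omega
      exact_mod_cast this
    · rw [div_le_iff₀ (by norm_num : (0:ℚ) < 2)]
      have : 5 * k ≤ ((5 * k + 1) / 2) * 2 := by omega
      exact_mod_cast this
  refine ⟨blowup_capFree k, blowup_evenHoleFree k, blowup_cliqueNum k, ?_, ?_⟩
  · rw [hceil]
    exact blowup_chromatic k hk
  · rw [blowup_cliqueNum k]
    have harg : (5 : ℚ) / 4 * ((2 * k : ℕ) : ℚ) = (5 * k : ℚ) / 2 := by push_cast; ring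
    rw [harg, hceil]
    exact blowup_chromatic k hk
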